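/- arXiv:1711.08625 — 2 statements merged into one kernel-verified Lean document; each statement's English description precedes it below -/
import Mathlib

section
/- Let p be a prime, M a finite group, P a Sylow p-subgroup of M, and N a normal p-subgroup of M with C_M(N) ≤ N. Let G = Park(M,P) be Park's group and ι : M → G Park's embedding. Then the centralizer C_G(ι(N)) of the image ι(N) in G is a p-group. -/
/-- Park's group `Park(M, P)`: the group of bijections of `M` commuting with the
right multiplication action of `P`. -/
def parkGroup (M : Type*) [Group M] (P : Subgroup M) : Subgroup (Equiv.Perm M) where
  carrier := {f : Equiv.Perm M | ∀ (m u : M), u ∈ P → f (m * u) = f m * u}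
  one_mem' := by intro m u _; rfl
  mul_mem' := by
    intro f g hf hg m u hu
    simp only [Equiv.Perm.mul_apply]
    rw [hg m u hu, hf _ u hu]
  inv_mem' := by
    intro f hf m u hu
    apply f.injective
    simp [hf _ u hu]

/-- Park's embedding of `M` into `Park(M, P)`, sending `m` to left translation by `m`. -/
def parkEmbed (M : Type*) [Group M] (P : Subgroup M) : M →* ↥(parkGroup M P) where
  toFun m := ⟨Equiv.mulLeft m, fun x u _ => by simp [mul_assoc]⟩
  map_one' := by
    apply Subtype.ext
    ext x
    simp
  map_mul' m n := by
    apply Subtype.ext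
    ext x
    simp [mul_assoc]

/-- `P` is a Sylow `p`-subgroup of a subgroup `H` of `G`. -/
def IsSylowIn (p : ℕ) {G : Type*} [Group G] (H P : Subgroup G) : Prop :=
  P ≤ H ∧ IsPGroup p P ∧ ∀ Q : Subgroup G, Q ≤ H → IsPGroup p Q → P ≤ Q → Q = P

/-- if `N` is a normal `p`-subgroup of `M` with `C_M(N) ≤ N` and `P` a
Sylow `p`-subgroup of `M`, then the centralizer of `ι(N)` in Park's group
`G = Park(M, P)` is a `p`-group. -/
theorem statement9 (p : ℕ) [Fact p.Prime] (M : Type*) [Group M] [Finite M]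
    (P : Subgroup M) (hsyl : IsSylowIn p ⊤ P)
    (N : Subgroup M) (hNnorm : N.Normal) (hNp : IsPGroup p N)
    (hNc : Subgroup.centralizer (N : Set M) ≤ N) :
    IsPGroup p (Subgroup.centralizer ((N.map (parkEmbed M P) : Subgroup ↥(parkGroup M P)) :
      Set ↥(parkGroup M P))) := by
  -- N ≤ P
  have hNP : N ≤ P := by
    haveI := hNnorm
    have hsup : IsPGroup p (N ⊔ P : Subgroup M) :=
      IsPGroup.to_sup_of_normal_left hNp hsyl.2.1
    have := hsyl.2.2 (N ⊔ P) le_top hsup le_sup_right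
    rw [← this]; exact le_sup_left
  obtain ⟨n, hn⟩ := (IsPGroup.iff_card (G := N)).mp hNp
  intro f
  refine ⟨n, ?_⟩
  obtain ⟨f, hf⟩ := f
  rw [Subgroup.mem_centralizer_iff] at hf
  -- f commutes with left multiplication by elements of N
  have hleft : ∀ n' ∈ N, ∀ x : M, (f : Equiv.Perm M) (n' * x) = n' * (f : Equiv.Perm M) x := by
    intro n' hn' x
    have h := hf ((parkEmbed M P) n') ⟨n', hn', rfl⟩
    have h2 : ((parkEmbed M P) n' * f : ↥(parkGroup M P)) = f * (parkEmbed M P) n' := h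
    have h3 := congrArg (fun g : ↥(parkGroup M P) => ((g : Equiv.Perm M)) x) h2
    simpa [parkEmbed, mul_assoc] using h3.symm
  -- f commutes with right multiplication by elements of N (since N ≤ P)
  have hright : ∀ n' ∈ N, ∀ x : M, (f : Equiv.Perm M) (x * n') = (f : Equiv.Perm M) x * n' :=
    fun n' hn' x => f.2 x n' (hNP hn')
  -- the "displacement" f x * x⁻¹ lies in N
  have hdisp : ∀ x : M, (f : Equiv.Perm M) x * x⁻¹ ∈ N := by
    intro x
    apply hNc
    rw [Subgroup.mem_centralizer_iff]
    intro b hb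
    have h1 : b * (f : Equiv.Perm M) x = (f : Equiv.Perm M) x * (x⁻¹ * b * x) := by
      rw [← hleft b hb x]
      have : b * x = x * (x⁻¹ * b * x) := by group
      rw [this, hright _ (by simpa using hNnorm.conj_mem b hb x⁻¹) x]
    calc b * ((f : Equiv.Perm M) x * x⁻¹)
        = (b * (f : Equiv.Perm M) x) * x⁻¹ := by group
      _ = ((f : Equiv.Perm M) x * (x⁻¹ * b * x)) * x⁻¹ := by rw [h1]
      _ = (f : Equiv.Perm M) x * x⁻¹ * b := by group
  -- iterate formula
  have hiter : ∀ (k : ℕ) (x : M),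
      ((f : Equiv.Perm M) ^ k) x = ((f : Equiv.Perm M) x * x⁻¹) ^ k * x := by
    intro k x
    induction k with
    | zero => simp
    | succ k ih =>
      rw [pow_succ', Equiv.Perm.mul_apply, ih,
        hleft _ (Subgroup.pow_mem N (hdisp x) k) x, pow_succ]
      group
  -- conclude
  apply Subtype.ext
  apply Subtype.ext
  ext x
  have hcoe : (((⟨f, Subgroup.mem_centralizer_iff.mpr hf⟩ :
      Subgroup.centralizer ((N.map (parkEmbed M P) : Subgroup ↥(parkGroup M P)) :
        Set ↥(parkGroup M P))) ^ p ^ n : _) : Equiv.Perm M) = (f : Equiv.Perm M) ^ p ^ n := by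
    norm_cast
  rw [hcoe, hiter (p ^ n) x]
  have hc : ((f : Equiv.Perm M) x * x⁻¹) ^ p ^ n = 1 := by
    have h1 : (⟨(f : Equiv.Perm M) x * x⁻¹, hdisp x⟩ : N) ^ p ^ n = 1 := by
      rw [← hn]; exact pow_card_eq_one'
    simpa [← Subgroup.coe_pow] using congrArg Subtype.val h1
  simp [hc]
end

section
/- Let p be a prime and M = Qd(p), with V, α and P = V⟨α⟩ as below. Let t = ((1,0), I) ∈ M be the element of V corresponding to the vector (1,0). Then the centralizer C_M(t) of t in M equals P. -/
/-- `SL(2, p)`. -/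
abbrev SL2 (p : ℕ) := Matrix.SpecialLinearGroup (Fin 2) (ZMod p)

/-- The additive automorphism of `ℤ/p × ℤ/p` (as `Fin 2 → ZMod p`) given by a
matrix in `SL(2, p)` acting by matrix–vector multiplication. -/
def sl2AddAut (p : ℕ) (A : SL2 p) : AddAut (Fin 2 → ZMod p) where
  toFun v := (A : Matrix (Fin 2) (Fin 2) (ZMod p)).mulVec v
  invFun v := ((A⁻¹ : SL2 p) : Matrix (Fin 2) (Fin 2) (ZMod p)).mulVec v
  left_inv v := by
    show (_ : Matrix (Fin 2) (Fin 2) (ZMod p)).mulVec (Matrix.mulVec _ v) = v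
    rw [Matrix.mulVec_mulVec, ← Matrix.SpecialLinearGroup.coe_mul, inv_mul_cancel,
      Matrix.SpecialLinearGroup.coe_one, Matrix.one_mulVec]
  right_inv v := by
    show (_ : Matrix (Fin 2) (Fin 2) (ZMod p)).mulVec (Matrix.mulVec _ v) = v
    rw [Matrix.mulVec_mulVec, ← Matrix.SpecialLinearGroup.coe_mul, mul_inv_cancel,
      Matrix.SpecialLinearGroup.coe_one, Matrix.one_mulVec]
  map_add' v w := Matrix.mulVec_add _ v w

/-- The action of `SL(2, p)` on `ℤ/p × ℤ/p` as a homomorphism into the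
(multiplicatively written) automorphism group. -/
def sl2Phi (p : ℕ) : SL2 p →* MulAut (Multiplicative (Fin 2 → ZMod p)) where
  toFun A := AddEquiv.toMultiplicative (sl2AddAut p A)
  map_one' := by
    ext v
    simp [sl2AddAut]
  map_mul' A B := by
    ext v i
    simp [sl2AddAut, Matrix.mulVec_mulVec]
    fin_cases i <;> simp [Matrix.mul_apply, Fin.sum_univ_two] <;> ring

/-- The quadratic group `Qd(p) = (ℤ/p × ℤ/p) ⋊ SL(2, p)`. -/
abbrev Qd (p : ℕ) := SemidirectProduct (Multiplicative (Fin 2 → ZMod p)) (SL2 p) (sl2Phi p)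

/-- The normal subgroup `V = ℤ/p × ℤ/p` of `Qd(p)`. -/
def QdV (p : ℕ) : Subgroup (Qd p) :=
  (SemidirectProduct.inl : Multiplicative (Fin 2 → ZMod p) →* Qd p).range

/-- The unipotent matrix `α = [[1,1],[0,1]] ∈ SL(2,p)`. -/
def alphaSL (p : ℕ) : SL2 p :=
  ⟨!![1, 1; 0, 1], by simp [Matrix.det_fin_two_of]⟩

/-- The element `α` of `Qd(p)`. -/
def Qdalpha (p : ℕ) : Qd p := SemidirectProduct.inr (alphaSL p)

/-- The Sylow `p`-subgroup `P = V⟨α⟩` of `Qd(p)`. -/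
def QdP (p : ℕ) : Subgroup (Qd p) := QdV p ⊔ Subgroup.zpowers (Qdalpha p)

/-- The central element `t = ((1,0), I)` of `P`. -/
def Qdt (p : ℕ) : Qd p := SemidirectProduct.inl (Multiplicative.ofAdd ![1, 0])

lemma alphaSL_pow (p n : ℕ) :
    ((alphaSL p ^ n : SL2 p) : Matrix (Fin 2) (Fin 2) (ZMod p)) = !![1, (n : ZMod p); 0, 1] := by
  induction n with
  | zero => simp [Matrix.one_fin_two]
  | succ n ih =>
      rw [pow_succ, Matrix.SpecialLinearGroup.coe_mul, ih]
      simp [alphaSL, Matrix.mul_fin_two, add_comm]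

/-- The stabilizer of `(1,0)` in `SL(2,p)`, as a subgroup. -/
def fixSub (p : ℕ) : Subgroup (SL2 p) where
  carrier := {A | (A : Matrix (Fin 2) (Fin 2) (ZMod p)).mulVec ![1, 0] = ![1, 0]}
  one_mem' := by simp
  mul_mem' := by
    intro A B hA hB
    simp only [Set.mem_setOf_eq] at *
    rw [Matrix.SpecialLinearGroup.coe_mul, ← Matrix.mulVec_mulVec, hB, hA]
  inv_mem' := by
    intro A hA
    simp only [Set.mem_setOf_eq] at *
    conv_lhs => rw [← hA]
    rw [Matrix.mulVec_mulVec, ← Matrix.SpecialLinearGroup.coe_mul, inv_mul_cancel,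
      Matrix.SpecialLinearGroup.coe_one, Matrix.one_mulVec]

lemma fix_iff_zpowers (p : ℕ) [NeZero p] (A : SL2 p) :
    (A : Matrix (Fin 2) (Fin 2) (ZMod p)).mulVec ![1, 0] = ![1, 0] ↔
      A ∈ Subgroup.zpowers (alphaSL p) := by
  constructor
  · intro h
    have h0 := congrFun h 0
    have h1 := congrFun h 1
    simp [Matrix.mulVec, dotProduct, Fin.sum_univ_two] at h0 h1
    have hdet : (A : Matrix (Fin 2) (Fin 2) (ZMod p)).det = 1 := A.2
    rw [Matrix.det_fin_two, h0, h1] at hdet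
    simp at hdet
    have : (alphaSL p ^ ((A : Matrix (Fin 2) (Fin 2) (ZMod p)) 0 1).val : SL2 p) = A := by
      apply Subtype.ext
      rw [alphaSL_pow]
      ext i j
      fin_cases i <;> fin_cases j <;> simp [h0, h1, hdet, ZMod.natCast_val, ZMod.cast_id]
    exact this ▸ Subgroup.npow_mem_zpowers _ _
  · intro h
    have hle : Subgroup.zpowers (alphaSL p) ≤ fixSub p := by
      rw [Subgroup.zpowers_le]
      show (alphaSL p : Matrix (Fin 2) (Fin 2) (ZMod p)).mulVec ![1, 0] = ![1, 0]
      funext i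
      fin_cases i <;> simp [alphaSL, Matrix.mulVec, dotProduct, Fin.sum_univ_two]
    exact hle h

lemma mem_QdP_iff (p : ℕ) (g : Qd p) :
    g ∈ QdP p ↔ g.right ∈ Subgroup.zpowers (alphaSL p) := by
  constructor
  · intro hg
    have hle : QdP p ≤ (Subgroup.zpowers (alphaSL p)).comap
        (SemidirectProduct.rightHom : Qd p →* SL2 p) := by
      apply sup_le
      · rintro x ⟨n, rfl⟩
        simp only [Subgroup.mem_comap, SemidirectProduct.rightHom_inl]
        exact one_mem _
      · rw [Subgroup.zpowers_le]
        simp only [Subgroup.mem_comap, Qdalpha, SemidirectProduct.rightHom_inr]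
        exact Subgroup.mem_zpowers _
    exact hle hg
  · rintro ⟨k, hk⟩
    have h1 : SemidirectProduct.inl g.left ∈ QdP p :=
      Subgroup.mem_sup_left ⟨g.left, rfl⟩
    have h2 : SemidirectProduct.inr g.right ∈ QdP p := by
      apply Subgroup.mem_sup_right
      refine ⟨k, ?_⟩
      rw [← hk]
      simp [Qdalpha, ← map_zpow]
    have := mul_mem h1 h2
    rwa [SemidirectProduct.inl_left_mul_inr_right] at this

/-- the centralizer of `t = ((1,0), I)` in `Qd(p)` equals the Sylow
`p`-subgroup `P = V⟨α⟩`. -/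
theorem statement11 (p : ℕ) [Fact p.Prime] :
    Subgroup.centralizer ({Qdt p} : Set (Qd p)) = QdP p := by
  have : NeZero p := ⟨(Fact.out : p.Prime).ne_zero⟩
  ext g
  rw [Subgroup.mem_centralizer_singleton_iff, mem_QdP_iff, ← fix_iff_zpowers]
  rw [SemidirectProduct.ext_iff]
  simp only [SemidirectProduct.mul_left, SemidirectProduct.mul_right, Qdt,
    SemidirectProduct.left_inl, SemidirectProduct.right_inl, map_one, mul_one, one_mul,
    MulAut.one_apply, and_true]
  have key : sl2Phi p g.right (Multiplicative.ofAdd ![1, 0]) =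
      Multiplicative.ofAdd ((g.right : Matrix (Fin 2) (Fin 2) (ZMod p)).mulVec ![1, 0]) := rfl
  constructor
  · intro h
    have h' : g.left * sl2Phi p g.right (Multiplicative.ofAdd ![1, 0]) =
        g.left * Multiplicative.ofAdd ![1, 0] := by rw [h, mul_comm]
    have h2 := mul_left_cancel h'
    rw [key] at h2
    exact Multiplicative.ofAdd.injective h2
  · intro h
    rw [key, h, mul_comm]
end
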